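/- Let f(a,y) = C·exp(−βH(y)) with β = 2ν/ε² > 0, H(y) = ½|y|², on G × ℝⁿ (left-trivialized T*G for a Lie group G). Then f is a steady solution of the Fokker–Planck equation fₜ + vᵏ eₖ f + bₖ ∂f/∂yₖ + ∂/∂yₖ(−ν vₖ f − (ε²/2) ∂f/∂yᵏ) = 0, where vᵏ = ∂H/∂yₖ = yᵏ and bₖ = yₗ c^l_{jk} ∂H/∂yⱼ. (For the formal verification it suffices to show: (i) bₖ ∂f/∂yₖ = 0 using antisymmetry c^l_{jk} = −c^l_{kj}; (ii) −ν yₖ f − (ε²/2) ∂f/∂yₖ = 0; (iii) eₖ f = 0 since f is independent of a.) -/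

import Mathlib

/-- f(y) = C exp(−β|y|²/2) with β = 2ν/ε² is a steady solution of the Fokker–Planck
equation: (i) bₖ ∂f/∂yₖ = 0 where bₖ = yₗ c^l_{jk} yⱼ (using antisymmetry of c in the
lower indices); (ii) −ν yₖ f − (ε²/2) ∂f/∂yₖ = 0.  (f is independent of the group
variable a by construction, so eₖ f = 0.) -/
theorem fokker_planck_steady_solution {n : ℕ}
    (c : Fin n → Fin n → Fin n → ℝ)
    (hc : ∀ l j k, c l j k = - c l k j)
    (ν ε Cst : ℝ) (hν : 0 < ν) (hε : 0 < ε) (β : ℝ) (hβ : β = 2 * ν / ε ^ 2)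
    (f : (Fin n → ℝ) → ℝ)
    (hf : ∀ y, f y = Cst * Real.exp (-β * (∑ i, y i ^ 2) / 2)) :
    (∀ y : Fin n → ℝ,
      ∑ k, (∑ j, ∑ l, y l * c l j k * y j) * fderiv ℝ f y (Pi.single k 1) = 0) ∧
    (∀ (y : Fin n → ℝ) (k : Fin n),
      -ν * y k * f y - ε ^ 2 / 2 * fderiv ℝ f y (Pi.single k 1) = 0) := by
  have hfun : f = fun y : Fin n → ℝ => Cst * Real.exp ((-β/2) * ∑ i, y i ^ 2) := by
    funext y; rw [hf]; ring_nf
  have key : ∀ (y : Fin n → ℝ) (k : Fin n),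
      fderiv ℝ f y (Pi.single k 1) = -β * y k * f y := by
    intro y k
    have hq : HasFDerivAt (fun y : Fin n → ℝ => ∑ i, y i * y i)
        (∑ i : Fin n, (y i • (ContinuousLinearMap.proj i : (Fin n → ℝ) →L[ℝ] ℝ)
          + y i • (ContinuousLinearMap.proj i : (Fin n → ℝ) →L[ℝ] ℝ))) y := by
      apply HasFDerivAt.fun_sum
      intro i _
      exact ((ContinuousLinearMap.proj i : (Fin n → ℝ) →L[ℝ] ℝ).hasFDerivAt (x := y)).mul
        ((ContinuousLinearMap.proj i : (Fin n → ℝ) →L[ℝ] ℝ).hasFDerivAt (x := y))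
    have heq : (fun y : Fin n → ℝ => ∑ i, y i ^ 2) = fun y : Fin n → ℝ => ∑ i, y i * y i := by
      funext z; exact Finset.sum_congr rfl fun i _ => sq (z i)
    rw [← heq] at hq
    have h1 := (hq.const_mul (-β/2)).exp.const_mul Cst
    have hD := h1.fderiv
    rw [hfun]
    rw [hD]
    simp only [ContinuousLinearMap.coe_smul', Pi.smul_apply, ContinuousLinearMap.sum_apply,
      ContinuousLinearMap.add_apply, ContinuousLinearMap.smul_apply,
      ContinuousLinearMap.proj_apply, smul_eq_mul, Pi.single_apply, mul_ite, mul_one, mul_zero,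
      Finset.sum_add_distrib, Finset.sum_ite_eq', Finset.mem_univ, if_true]
    ring
  constructor
  · intro y
    simp only [key]
    have expand : ∀ k : Fin n, (∑ j, ∑ l, y l * c l j k * y j) * (-β * y k * f y)
        = ∑ j, (∑ l, y l * c l j k * y j) * (-β * y k * f y) := by
      intro k; rw [Finset.sum_mul]
    simp only [expand]
    set B : Fin n → Fin n → ℝ := fun j k => (∑ l, y l * c l j k * y j) * (-β * y k * f y)
      with hB
    have hanti : ∀ j k, B j k = - B k j := by
      intro j k
      simp only [hB, Finset.sum_mul, ← Finset.sum_neg_distrib]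
      apply Finset.sum_congr rfl
      intro l _
      rw [hc l j k]; ring
    have hswap : (∑ k, ∑ j, B j k) = - ∑ k, ∑ j, B j k := by
      conv_lhs => rw [Finset.sum_comm]
      rw [← Finset.sum_neg_distrib]
      apply Finset.sum_congr rfl
      intro j _
      rw [← Finset.sum_neg_distrib]
      exact Finset.sum_congr rfl fun k _ => hanti j k
    linarith
  · intro y k
    rw [key, hβ]
    field_simp
    ring
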